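/- Let q be a prime power and S a set of q+2 points of PG(2,q). Suppose x ∈ S is a point such that all q+1 lines through x are bi-secants of S, and let y, z ∈ S∖{x} be distinct. Then the vector representatives of x, y, z form a basis of F_q^3, and writing each point s ∈ S∖{x,y,z} in coordinates (s_1,s_2,s_3) with respect to this basis, one has s_2 ≠ 0 and s_3 ≠ 0 for every such s, and ∏_{s ∈ S∖{x,y,z}} (−s_2/s_3) = −1 (each factor −s_2/s_3 depends only on the point s, not on the chosen representative vector). -/

import Mathlib

open Projectivization

abbrev Pt (F : Type) [Field F] : Type := Projectivization F (Fin 3 → F)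

def IsLine (F : Type) [Field F] (W : Submodule F (Fin 3 → F)) : Prop :=
  Module.finrank F W = 2

noncomputable def secantCount (F : Type) [Field F] (S : Set (Pt F))
    (W : Submodule F (Fin 3 → F)) : ℕ :=
  {p ∈ S | p.submodule ≤ W}.ncard

noncomputable def oddSecants (F : Type) [Field F] (S : Set (Pt F)) : ℕ :=
  {W : Submodule F (Fin 3 → F) | IsLine F W ∧ Odd (secantCount F S W)}.ncard

noncomputable def linesThroughWithCount (F : Type) [Field F] (S : Set (Pt F))
    (x : Pt F) (i : ℕ) : ℕ :=
  {W : Submodule F (Fin 3 → F) | IsLine F W ∧ x.submodule ≤ W ∧ secantCount F S W = i}.ncard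

noncomputable def S43 (F : Type) [Field F] [Fintype F] (S : Set (Pt F)) : Set (Pt F) :=
  {x ∈ S | linesThroughWithCount F S x 1 = 1 ∧ linesThroughWithCount F S x 3 = 1 ∧
    linesThroughWithCount F S x 2 = Fintype.card F - 1}

section Aux

variable {F : Type} [Field F]

lemma pairRepLI {p q : Pt F} (h : p ≠ q) : LinearIndependent F ![p.rep, q.rep] := by
  have h2 := (independent_pair_iff_ne p q).2 h
  rw [independent_iff] at h2
  have e : (![p.rep, q.rep] : Fin 2 → Fin 3 → F) = Projectivization.rep ∘ ![p, q] := by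
    funext i; fin_cases i <;> rfl
  rw [e]; exact h2

lemma isLine_span_pair {a b : Fin 3 → F} (h : LinearIndependent F ![a, b]) :
    IsLine F (Submodule.span F {a, b}) := by
  have hr : ({a, b} : Set (Fin 3 → F)) = Set.range ![a, b] := by
    simp [Matrix.range_cons, Matrix.range_empty, Set.pair_comm]
  rw [IsLine, hr, finrank_span_eq_card h]
  simp

lemma submodule_le_iff (v : Pt F) (W : Submodule F (Fin 3 → F)) :
    v.submodule ≤ W ↔ v.rep ∈ W := by
  rw [Projectivization.submodule_eq, Submodule.span_singleton_le_iff_mem]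

lemma prod_erase_zero (F : Type) [Field F] [Fintype F] [DecidableEq F] :
    ∏ a ∈ (Finset.univ.erase (0:F)), a = -1 := by
  have : Fintype Fˣ := Fintype.ofFinite _
  have h1 : ∏ x : Fˣ, (x : F) = ∏ a ∈ (Finset.univ.erase (0:F)), a := by
    refine Finset.prod_bij (fun x _ => (x : F)) ?_ ?_ ?_ ?_
    · intro x _; simp [Units.ne_zero]
    · intro a _ b _ h; exact Units.ext h
    · intro a ha; exact ⟨Units.mk0 a (Finset.mem_erase.1 ha).1, Finset.mem_univ _, rfl⟩
    · intros; rfl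
  have h2 : ∏ x : Fˣ, (x : F) = ((∏ x : Fˣ, x : Fˣ) : F) := (map_prod (Units.coeHom F) _ _).symm
  rw [← h1, h2, FiniteField.prod_univ_units_id_eq_neg_one]
  simp

end Aux

/-- Segre-type product identity at a point `x` of a `(q+2)`-set all of whose lines are
bi-secants: with respect to the basis formed by representatives of `x`, `y`, `z`, the
coordinates `s₂, s₃` of every further point of `S` are nonzero and the product of the
factors `-s₂/s₃` equals `-1`. -/
theorem product_identity_at_internal_nucleus (F : Type) [Field F] [Fintype F]
    [DecidableEq (Pt F)]
    (S : Finset (Pt F)) (hS : S.card = Fintype.card F + 2)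
    (x y z : Pt F) (hx : x ∈ S) (hy : y ∈ S) (hz : z ∈ S)
    (hxy : x ≠ y) (hxz : x ≠ z) (hyz : y ≠ z)
    (hbisec : ∀ W : Submodule F (Fin 3 → F), IsLine F W → x.submodule ≤ W →
      secantCount F (↑S) W = 2) :
    ∃ b : Module.Basis (Fin 3) F (Fin 3 → F),
      b 0 = x.rep ∧ b 1 = y.rep ∧ b 2 = z.rep ∧
      (∀ s ∈ S \ {x, y, z}, b.repr s.rep 1 ≠ 0 ∧ b.repr s.rep 2 ≠ 0) ∧
      ∏ s ∈ S \ {x, y, z}, (-(b.repr s.rep 1) / b.repr s.rep 2) = -1 := by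
  classical
  -- no three distinct points of S on a line through x
  have h3 : ∀ W : Submodule F (Fin 3 → F), IsLine F W → x.rep ∈ W →
      ∀ p q : Pt F, p ∈ S → q ∈ S → x ≠ p → x ≠ q → p ≠ q →
      p.rep ∈ W → q.rep ∈ W → False := by
    intro W hW hxW p q hpS hqS hxp hxq hpq hpW hqW
    have hsec : secantCount F (↑S) W = 2 := hbisec W hW ((submodule_le_iff x W).2 hxW)
    have hsub : ({x, p, q} : Set (Pt F)) ⊆ {a ∈ (↑S : Set (Pt F)) | a.submodule ≤ W} := by
      intro a ha
      rcases ha with rfl | rfl | rfl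
      · exact ⟨hx, (submodule_le_iff _ _).2 hxW⟩
      · exact ⟨hpS, (submodule_le_iff _ _).2 hpW⟩
      · exact ⟨hqS, (submodule_le_iff _ _).2 hqW⟩
    have hfin : {a ∈ (↑S : Set (Pt F)) | a.submodule ≤ W}.Finite :=
      S.finite_toSet.subset (fun a ha => ha.1)
    have h33 : ({x, p, q} : Set (Pt F)).ncard = 3 :=
      Set.ncard_eq_three.2 ⟨x, p, q, hxp, hxq, hpq, rfl⟩
    have hsec' : {a ∈ (↑S : Set (Pt F)) | a.submodule ≤ W}.ncard = 2 := hsec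
    have := Set.ncard_le_ncard hsub hfin
    rw [h33, hsec'] at this
    omega
  -- x, y, z in general position
  have hxyz : x.rep ∉ Submodule.span F {y.rep, z.rep} := by
    intro hmem
    exact h3 _ (isLine_span_pair (pairRepLI hyz)) hmem y z hy hz hxy hxz hyz
      (Submodule.subset_span (by left; rfl)) (Submodule.subset_span (by right; rfl))
  have hLI : LinearIndependent F ![x.rep, y.rep, z.rep] := by
    rw [show (![x.rep, y.rep, z.rep] : Fin 3 → Fin 3 → F) = Fin.cons x.rep ![y.rep, z.rep]
        from rfl, linearIndependent_fin_cons]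
    refine ⟨pairRepLI hyz, ?_⟩
    rwa [show Set.range ![y.rep, z.rep] = {y.rep, z.rep} by
      simp [Matrix.range_cons, Matrix.range_empty, Set.pair_comm]]
  have hcard3 : Fintype.card (Fin 3) = Module.finrank F (Fin 3 → F) := by simp
  set b : Module.Basis (Fin 3) F (Fin 3 → F) := basisOfLinearIndependentOfCardEqFinrank hLI hcard3
    with hbdef
  have hb : ⇑b = ![x.rep, y.rep, z.rep] :=
    coe_basisOfLinearIndependentOfCardEqFinrank hLI hcard3
  have hb0 : b 0 = x.rep := by rw [hb]; rfl
  have hb1 : b 1 = y.rep := by rw [hb]; rfl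
  have hb2 : b 2 = z.rep := by rw [hb]; rfl
  set co : Pt F → Fin 3 → F := fun s i => b.repr s.rep i with hco
  have hrepr : ∀ s : Pt F, s.rep = co s 0 • x.rep + co s 1 • y.rep + co s 2 • z.rep := by
    intro s
    have h := b.sum_repr s.rep
    rw [Fin.sum_univ_three, hb0, hb1, hb2] at h
    rw [← h]
  have hcoef : ∀ a bb cc : F, a • x.rep + bb • y.rep + cc • z.rep = 0 →
      a = 0 ∧ bb = 0 ∧ cc = 0 := by
    intro a bb cc h
    have h2 := Fintype.linearIndependent_iff.1 hLI ![a, bb, cc] ?_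
    · exact ⟨h2 0, h2 1, h2 2⟩
    · rw [Fin.sum_univ_three]; simpa using h
  -- coordinates 1 and 2 are nonzero for points off the triangle
  have hnz : ∀ s : Pt F, s ∈ S → s ≠ x → s ≠ y → s ≠ z → co s 1 ≠ 0 ∧ co s 2 ≠ 0 := by
    intro s hsS hsx hsy hsz
    constructor
    · intro h0
      have hmem : s.rep ∈ Submodule.span F {x.rep, z.rep} := by
        rw [hrepr s, h0, zero_smul, add_zero]
        exact Submodule.add_mem _
          (Submodule.smul_mem _ _ (Submodule.subset_span (by left; rfl)))
          (Submodule.smul_mem _ _ (Submodule.subset_span (by right; rfl)))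
      exact h3 _ (isLine_span_pair (pairRepLI hxz)) (Submodule.subset_span (by left; rfl))
        z s hz hsS hxz (Ne.symm hsx) (Ne.symm hsz)
        (Submodule.subset_span (by right; rfl)) hmem
    · intro h0
      have hmem : s.rep ∈ Submodule.span F {x.rep, y.rep} := by
        rw [hrepr s, h0, zero_smul, add_zero]
        exact Submodule.add_mem _
          (Submodule.smul_mem _ _ (Submodule.subset_span (by left; rfl)))
          (Submodule.smul_mem _ _ (Submodule.subset_span (by right; rfl)))
      exact h3 _ (isLine_span_pair (pairRepLI hxy)) (Submodule.subset_span (by left; rfl))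
        y s hy hsS hxy (Ne.symm hsx) (Ne.symm hsy)
        (Submodule.subset_span (by right; rfl)) hmem
  -- injectivity of the ratio map
  have hinj : ∀ s t : Pt F, s ∈ S → t ∈ S → s ≠ x → s ≠ y → s ≠ z → t ≠ x → t ≠ y → t ≠ z →
      co s 1 * co t 2 = co t 1 * co s 2 → s = t := by
    intro s t hsS htS hsx hsy hsz htx hty htz hcross
    by_contra hst
    obtain ⟨hs1, hs2⟩ := hnz s hsS hsx hsy hsz
    obtain ⟨ht1, ht2⟩ := hnz t htS htx hty htz
    set v : Fin 3 → F := co s 1 • y.rep + co s 2 • z.rep with hv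
    have hLIxv : LinearIndependent F ![x.rep, v] := by
      rw [LinearIndependent.pair_iff]
      intro a bb hab
      have h0 : a • x.rep + (bb * co s 1) • y.rep + (bb * co s 2) • z.rep = 0 := by
        rw [← hab, hv]; module
      obtain ⟨ha, hb', hc'⟩ := hcoef _ _ _ h0
      exact ⟨ha, by
        rcases mul_eq_zero.1 hc' with h | h
        · exact h
        · exact absurd h hs2⟩
    have hW : IsLine F (Submodule.span F ({x.rep, v} : Set (Fin 3 → F))) :=
      isLine_span_pair hLIxv
    have hxW : x.rep ∈ Submodule.span F ({x.rep, v} : Set (Fin 3 → F)) :=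
      Submodule.subset_span (by left; rfl)
    have hvW : v ∈ Submodule.span F ({x.rep, v} : Set (Fin 3 → F)) :=
      Submodule.subset_span (by right; rfl)
    have hsW : s.rep ∈ Submodule.span F ({x.rep, v} : Set (Fin 3 → F)) := by
      have : s.rep = co s 0 • x.rep + v := by rw [hrepr s, hv]; module
      rw [this]
      exact Submodule.add_mem _ (Submodule.smul_mem _ _ hxW) hvW
    have htW : t.rep ∈ Submodule.span F ({x.rep, v} : Set (Fin 3 → F)) := by
      have e1 : co t 2 / co s 2 * co s 1 = co t 1 := by
        field_simp; linear_combination hcross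
      have e2 : co t 2 / co s 2 * co s 2 = co t 2 := by field_simp
      have hveq : (co t 2 / co s 2) • v = co t 1 • y.rep + co t 2 • z.rep := by
        rw [hv, smul_add, smul_smul, smul_smul, e1, e2]
      have : t.rep = co t 0 • x.rep + (co t 2 / co s 2) • v := by
        rw [hrepr t, hveq, add_assoc]
      rw [this]
      exact Submodule.add_mem _ (Submodule.smul_mem _ _ hxW) (Submodule.smul_mem _ _ hvW)
    exact h3 _ hW hxW s t hsS htS (Ne.symm hsx) (Ne.symm htx) hst hsW htW
  refine ⟨b, hb0, hb1, hb2, ?_, ?_⟩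
  · intro s hs
    rw [Finset.mem_sdiff, Finset.mem_insert, Finset.mem_insert, Finset.mem_singleton] at hs
    push_neg at hs
    exact hnz s hs.1 hs.2.1 hs.2.2.1 hs.2.2.2
  -- the product
  set T : Finset (Pt F) := S \ {x, y, z} with hT
  have hmemT : ∀ s, s ∈ T ↔ s ∈ S ∧ s ≠ x ∧ s ≠ y ∧ s ≠ z := by
    intro s
    rw [hT, Finset.mem_sdiff, Finset.mem_insert, Finset.mem_insert, Finset.mem_singleton]
    tauto
  have hq2 : 2 ≤ Fintype.card F := Fintype.one_lt_card
  have hcardT : T.card = Fintype.card F - 1 := by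
    have hsub : ({x, y, z} : Finset (Pt F)) ⊆ S := by
      intro a ha
      rcases Finset.mem_insert.1 ha with rfl | ha
      · exact hx
      rcases Finset.mem_insert.1 ha with rfl | ha
      · exact hy
      rw [Finset.mem_singleton] at ha; subst ha; exact hz
    have h33 : ({x, y, z} : Finset (Pt F)).card = 3 := by
      rw [Finset.card_insert_of_notMem (by simp [hxy, hxz]),
        Finset.card_insert_of_notMem (by simp [hyz]), Finset.card_singleton]
    rw [hT, Finset.card_sdiff_of_subset hsub, h33, hS]
    omega
  set f : Pt F → F := fun s => co s 1 / co s 2 with hf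
  have hfnz : ∀ s ∈ T, f s ≠ 0 := by
    intro s hs
    obtain ⟨hsS, hsx, hsy, hsz⟩ := (hmemT s).1 hs
    obtain ⟨h1, h2⟩ := hnz s hsS hsx hsy hsz
    exact div_ne_zero h1 h2
  have hfinj : ∀ s ∈ T, ∀ t ∈ T, f s = f t → s = t := by
    intro s hs t ht hft
    obtain ⟨hsS, hsx, hsy, hsz⟩ := (hmemT s).1 hs
    obtain ⟨htS, htx, hty, htz⟩ := (hmemT t).1 ht
    obtain ⟨hs1, hs2⟩ := hnz s hsS hsx hsy hsz
    obtain ⟨ht1, ht2⟩ := hnz t htS htx hty htz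
    rw [hf, div_eq_div_iff hs2 ht2] at hft
    exact hinj s t hsS htS hsx hsy hsz htx hty htz hft
  have himg : T.image f = Finset.univ.erase (0 : F) := by
    apply Finset.eq_of_subset_of_card_le
    · intro a ha
      obtain ⟨s, hs, rfl⟩ := Finset.mem_image.1 ha
      exact Finset.mem_erase.2 ⟨hfnz s hs, Finset.mem_univ _⟩
    · rw [Finset.card_erase_of_mem (Finset.mem_univ _), Finset.card_univ,
        Finset.card_image_of_injOn hfinj, hcardT]
  have hprodf : ∏ s ∈ T, f s = -1 := by
    have h4 : ∏ a ∈ T.image f, a = ∏ s ∈ T, f s := Finset.prod_image hfinj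
    rw [← h4, himg]
    exact prod_erase_zero F
  calc ∏ s ∈ T, (-(b.repr s.rep 1) / b.repr s.rep 2)
      = ∏ s ∈ T, (-1 * f s) := by
        apply Finset.prod_congr rfl
        intro s _
        rw [hf]
        field_simp
        rfl
    _ = (-1 : F) ^ T.card * ∏ s ∈ T, f s := by
        rw [Finset.prod_mul_distrib, Finset.prod_const]
    _ = -1 := by
        rw [hprodf, hcardT,
          FiniteField.pow_card_sub_one_eq_one (-1 : F) (neg_ne_zero.2 one_ne_zero)]
        ring
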